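/- If a collection S of k-element subsets of [ℓ] has the property that F(σ) is nonempty for every σ ∈ S, then S is an independent set of atoms, i.e., for every σ ∈ S, |⋃_{τ∈S∖σ} τ| minus the number of connected components of S∖{σ} is strictly less than |⋃_{τ∈S} τ| minus the number of connected components of S. -/

import Mathlib

/-- Two atoms are connected in the hypergraph with edge set `T` if they are linked by a
chain of pairwise-intersecting atoms of `T`. -/
def hconnRel {α : Type*} [DecidableEq α] (T : Finset (Finset α)) (a b : Finset α) : Prop :=
  Relation.ReflTransGen (fun x y : Finset α => x ∈ T ∧ y ∈ T ∧ (x ∩ y).Nonempty) a b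

/-- The number of connected components of the hypergraph with edge set `T`. -/
noncomputable def ncomp {α : Type*} [DecidableEq α] (T : Finset (Finset α)) : ℕ :=
  Set.ncard ((fun σ => {τ | τ ∈ T ∧ hconnRel T σ τ}) '' (T : Set (Finset α)))

open Relation

lemma hconn_mono {α : Type*} [DecidableEq α] {T T' : Finset (Finset α)} (h : T ⊆ T')
    {a b : Finset α} (hab : hconnRel T a b) : hconnRel T' a b :=
  ReflTransGen.mono (fun x y (hxy : x ∈ T ∧ y ∈ T ∧ (x ∩ y).Nonempty) =>
    (⟨h hxy.1, h hxy.2.1, hxy.2.2⟩ : x ∈ T' ∧ y ∈ T' ∧ (x ∩ y).Nonempty)) a b hab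

lemma hconn_symm {α : Type*} [DecidableEq α] {T : Finset (Finset α)} {a b : Finset α}
    (h : hconnRel T a b) : hconnRel T b a := by
  induction h with
  | refl => exact ReflTransGen.refl
  | tail _ h ih => exact ReflTransGen.head ⟨h.2.1, h.1, by rw [Finset.inter_comm]; exact h.2.2⟩ ih

/-- The connected component of `σ`. -/
def hcomp {α : Type*} [DecidableEq α] (T : Finset (Finset α)) (σ : Finset α) :
    Set (Finset α) := {τ | τ ∈ T ∧ hconnRel T σ τ}

lemma hcomp_eq_of_conn {α : Type*} [DecidableEq α] {T : Finset (Finset α)} {a b : Finset α}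
    (h : hconnRel T a b) : hcomp T a = hcomp T b := by
  ext x
  constructor
  · rintro ⟨hx, hax⟩
    exact ⟨hx, (hconn_symm h).trans hax⟩
  · rintro ⟨hx, hbx⟩
    exact ⟨hx, h.trans hbx⟩

lemma ncomp_eq {α : Type*} [DecidableEq α] (T : Finset (Finset α)) :
    ncomp T = Set.ncard (hcomp T '' (T : Set (Finset α))) := rfl

theorem stmt2 (ℓ k : ℕ) (hk : 2 ≤ k)
    (S : Finset (Finset (Fin ℓ)))
    (hcard : ∀ σ ∈ S, σ.card = k)
    -- F(σ) nonempty for every σ ∈ S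
    (hF : ∀ σ ∈ S, (σ \ (S.erase σ).sup id).Nonempty) :
    -- S is independent: removing any atom strictly decreases
    -- |⋃ T| − (number of connected components of T)
    ∀ σ ∈ S, ((((S.erase σ).sup id).card : ℤ) - ncomp (S.erase σ))
      < (((S.sup id).card : ℤ) - ncomp S) := by
  intro σ hσ
  set S' := S.erase σ with hS'def
  have hSsub : S' ⊆ S := Finset.erase_subset _ _
  have hσS' : σ ∉ S' := Finset.notMem_erase _ _
  have hins : insert σ S' = S := Finset.insert_erase hσ
  -- union cardinality
  have hsup : S.sup id = σ ∪ S'.sup id := by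
    rw [← hins, Finset.sup_insert]; rfl
  have hcardU : (S.sup id).card = (σ \ S'.sup id).card + (S'.sup id).card := by
    rw [hsup, ← Finset.card_sdiff_add_card]
  have hFσ : (σ \ S'.sup id).Nonempty := hF σ hσ
  have hF1 : 1 ≤ (σ \ S'.sup id).card := Finset.card_pos.mpr hFσ
  by_cases hcase : ∃ τ ∈ S', (σ ∩ τ).Nonempty
  · -- σ meets some other atom: ncomp S ≤ ncomp S'
    obtain ⟨τ₀, hτ₀, hint⟩ := hcase
    have hστ₀ : hconnRel S σ τ₀ := ReflTransGen.single ⟨hσ, hSsub hτ₀, hint⟩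
    set g : Set (Finset (Fin ℓ)) → Set (Finset (Fin ℓ)) :=
      fun C => {x | x ∈ S ∧ ∃ y ∈ C, hconnRel S y x} with hg
    have hgcomp : ∀ τ ∈ S', g (hcomp S' τ) = hcomp S τ := by
      intro τ hτ
      ext x
      constructor
      · rintro ⟨hx, y, ⟨hyS', hτy⟩, hyx⟩
        exact ⟨hx, (hconn_mono hSsub hτy).trans hyx⟩
      · rintro ⟨hx, hτx⟩
        exact ⟨hx, τ, ⟨hτ, ReflTransGen.refl⟩, hτx⟩
    have hsub : hcomp S '' (S : Set (Finset (Fin ℓ)))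
        ⊆ g '' (hcomp S' '' (S' : Set (Finset (Fin ℓ)))) := by
      rintro C ⟨τ, hτ, rfl⟩
      by_cases hτσ : τ = σ
      · subst hτσ
        refine ⟨hcomp S' τ₀, ⟨τ₀, hτ₀, rfl⟩, ?_⟩
        rw [hgcomp τ₀ hτ₀, hcomp_eq_of_conn hστ₀]
      · have hτS' : τ ∈ S' := Finset.mem_erase.mpr ⟨hτσ, hτ⟩
        exact ⟨hcomp S' τ, ⟨τ, hτS', rfl⟩, hgcomp τ hτS'⟩
    have hfin : (hcomp S' '' (S' : Set (Finset (Fin ℓ)))).Finite :=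
      (S' : Set (Finset (Fin ℓ))).toFinite.image _
    have hncomp : ncomp S ≤ ncomp S' := by
      rw [ncomp_eq, ncomp_eq]
      calc Set.ncard (hcomp S '' (S : Set (Finset (Fin ℓ))))
          ≤ Set.ncard (g '' (hcomp S' '' (S' : Set (Finset (Fin ℓ))))) :=
            Set.ncard_le_ncard hsub (hfin.image _)
        _ ≤ Set.ncard (hcomp S' '' (S' : Set (Finset (Fin ℓ)))) :=
            Set.ncard_image_le hfin
    rw [hcardU]
    have h2 : (ncomp S : ℤ) ≤ ncomp S' := by exact_mod_cast hncomp
    have h1 : (1:ℤ) ≤ ((σ \ S'.sup id).card : ℤ) := by exact_mod_cast hF1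
    push_cast
    linarith
  · -- σ is disjoint from all other atoms
    push_neg at hcase
    have hdisj : ∀ τ ∈ S', σ ∩ τ = ∅ := by
      intro τ hτ
      exact hcase τ hτ
    -- σ is disjoint from the union of the others
    have hdisjU : Disjoint σ (S'.sup id) := by
      rw [Finset.disjoint_left]
      intro x hxσ hxU
      obtain ⟨τ, hτ, hxτ⟩ := Finset.mem_sup.mp hxU
      have : x ∈ σ ∩ τ := Finset.mem_inter.mpr ⟨hxσ, hxτ⟩
      rw [hdisj τ hτ] at this
      exact absurd this (Finset.notMem_empty x)
    have hsdiff : σ \ S'.sup id = σ := Finset.sdiff_eq_self_of_disjoint hdisjU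
    have hkcard : (σ \ S'.sup id).card = k := by rw [hsdiff]; exact hcard σ hσ
    -- the component of σ in S is {σ}
    have hcompσ : hcomp S σ = {σ} := by
      ext x
      constructor
      · rintro ⟨hx, hconn⟩
        clear hx
        induction hconn with
        | refl => rfl
        | tail _ hstep ih =>
          rename_i b c _
          have hb : b = σ := ih
          subst hb
          obtain ⟨hbS, hcS, hbc⟩ := hstep
          by_contra hcσ
          have hcS' : c ∈ S' := Finset.mem_erase.mpr ⟨fun h => hcσ (by simp [h]), hcS⟩
          rw [hdisj c hcS'] at hbc
          exact Finset.not_nonempty_empty hbc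
      · rintro rfl
        exact ⟨hσ, ReflTransGen.refl⟩
    -- components of the others are unchanged
    have hstay : ∀ τ ∈ S', ∀ x, hconnRel S τ x → x ∈ S' ∧ hconnRel S' τ x := by
      intro τ hτ x hconn
      induction hconn with
      | refl => exact ⟨hτ, ReflTransGen.refl⟩
      | tail _ hstep ih =>
        rename_i b c _
        obtain ⟨hbS', hτb⟩ := ih
        obtain ⟨hbS, hcS, hbc⟩ := hstep
        have hcσ : c ≠ σ := by
          rintro rfl
          rw [Finset.inter_comm, hdisj b hbS'] at hbc
          exact Finset.not_nonempty_empty hbc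
        have hcS' : c ∈ S' := Finset.mem_erase.mpr ⟨hcσ, hcS⟩
        exact ⟨hcS', hτb.tail ⟨hbS', hcS', hbc⟩⟩
    have hcompτ : ∀ τ ∈ S', hcomp S τ = hcomp S' τ := by
      intro τ hτ
      ext x
      constructor
      · rintro ⟨hx, hconn⟩
        obtain ⟨hxS', hconn'⟩ := hstay τ hτ x hconn
        exact ⟨hxS', hconn'⟩
      · rintro ⟨hx, hconn⟩
        exact ⟨hSsub hx, hconn_mono hSsub hconn⟩
    have himg : hcomp S '' (S : Set (Finset (Fin ℓ)))
        = insert {σ} (hcomp S' '' (S' : Set (Finset (Fin ℓ)))) := by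
      have hSset : (S : Set (Finset (Fin ℓ))) = insert σ (S' : Set (Finset (Fin ℓ))) := by
        rw [← hins, Finset.coe_insert]
      rw [hSset, Set.image_insert_eq, hcompσ]
      congr 1
      exact Set.image_congr (fun τ hτ => hcompτ τ hτ)
    have hnotmem : ({σ} : Set (Finset (Fin ℓ))) ∉ hcomp S' '' (S' : Set (Finset (Fin ℓ))) := by
      rintro ⟨τ, hτ, heq⟩
      have : τ ∈ hcomp S' τ := ⟨hτ, ReflTransGen.refl⟩
      rw [heq] at this
      exact hσS' (this ▸ hτ)
    have hfin : (hcomp S' '' (S' : Set (Finset (Fin ℓ)))).Finite :=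
      (S' : Set (Finset (Fin ℓ))).toFinite.image _
    have hncomp : ncomp S = ncomp S' + 1 := by
      rw [ncomp_eq, ncomp_eq, himg, Set.ncard_insert_of_notMem hnotmem hfin]
    rw [hcardU, hkcard, hncomp]
    push_cast
    have : (2:ℤ) ≤ k := by exact_mod_cast hk
    linarith
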